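/- The closure of A in ℂ³ contains the entire line {(0, 0, w) : w ∈ ℂ}. In fact already the subset of A with a = b = 0, namely {(e^{2πiz₁}, e^{2πiz₂}, z₂ − z₁) : z₁, z₂ ∈ ℍ}, has closure in ℂ³ containing {(0,0)} × ℂ. (In the paper this shows that the closure of the graph of an admissible normal function with a nontorsion singularity can have a positive-dimensional fiber over the origin.) -/

import Mathlib

open Filter Complex

lemma exp_aux (c : ℂ) :
    Filter.Tendsto (fun t : ℝ =>
      Complex.exp (2 * Real.pi * Complex.I * ((t : ℂ) * Complex.I + c)))
      Filter.atTop (nhds 0) := by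
  rw [tendsto_zero_iff_norm_tendsto_zero]
  have h : ∀ t : ℝ, ‖Complex.exp (2 * Real.pi * Complex.I * ((t : ℂ) * Complex.I + c))‖
      = Real.exp (-(2 * Real.pi) * t + (2 * Real.pi * Complex.I * c).re) := by
    intro t
    rw [Complex.norm_exp]
    congr 1
    simp [Complex.add_re, Complex.mul_re, Complex.mul_im]
    ring
  simp_rw [h]
  apply Real.tendsto_exp_atBot.comp
  apply Filter.tendsto_atBot_add_const_right
  exact Filter.tendsto_id.const_mul_atTop_of_neg (neg_neg_of_pos (by positivity)) 

/-- The closure of the graph set `A` contains the whole line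
`{(0,0,w) : w ∈ ℂ}`; in fact already the subset of `A` with `a = b = 0` has closure
containing this line. -/
theorem stmt14
    (A : Set (ℂ × ℂ × ℂ))
    (hA : A = {p | ∃ z₁ z₂ : ℂ, 0 < z₁.im ∧ 0 < z₂.im ∧ ∃ a b : ℤ,
      p = (Complex.exp (2 * Real.pi * Complex.I * z₁),
           Complex.exp (2 * Real.pi * Complex.I * z₂),
           (a : ℂ) - (b : ℂ) * (z₁ + z₂) + (z₂ - z₁))}) :
    (∀ w : ℂ, ((0 : ℂ), (0 : ℂ), w) ∈
      closure {p : ℂ × ℂ × ℂ | ∃ z₁ z₂ : ℂ, 0 < z₁.im ∧ 0 < z₂.im ∧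
        p = (Complex.exp (2 * Real.pi * Complex.I * z₁),
             Complex.exp (2 * Real.pi * Complex.I * z₂), z₂ - z₁)}) ∧
    (∀ w : ℂ, ((0 : ℂ), (0 : ℂ), w) ∈ closure A) := by
  have key : ∀ w : ℂ, ((0 : ℂ), (0 : ℂ), w) ∈
      closure {p : ℂ × ℂ × ℂ | ∃ z₁ z₂ : ℂ, 0 < z₁.im ∧ 0 < z₂.im ∧
        p = (Complex.exp (2 * Real.pi * Complex.I * z₁),
             Complex.exp (2 * Real.pi * Complex.I * z₂), z₂ - z₁)} := by
    intro w
    have htend : Filter.Tendsto (fun t : ℝ =>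
      (Complex.exp (2 * Real.pi * Complex.I * ((t : ℂ) * Complex.I)),
       Complex.exp (2 * Real.pi * Complex.I * ((t : ℂ) * Complex.I + w)), w))
        Filter.atTop (nhds ((0 : ℂ), (0 : ℂ), w)) := by
      have h1 := exp_aux 0
      simp only [add_zero] at h1
      rw [nhds_prod_eq, nhds_prod_eq]
      exact h1.prodMk ((exp_aux w).prodMk (tendsto_const_nhds : Filter.Tendsto (fun _ : ℝ => w) Filter.atTop (nhds w)))
    refine mem_closure_of_tendsto htend ?_
    filter_upwards [Filter.eventually_gt_atTop (max 0 (-w.im))] with t ht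
    refine ⟨(t : ℂ) * Complex.I, (t : ℂ) * Complex.I + w, ?_, ?_, ?_⟩
    · simpa using lt_of_le_of_lt (le_max_left _ _) ht
    · have : -w.im < t := lt_of_le_of_lt (le_max_right _ _) ht
      simp only [Complex.add_im, Complex.mul_im, Complex.ofReal_re, Complex.I_im,
        Complex.ofReal_im, Complex.I_re, mul_one, mul_zero, add_zero, zero_mul]
      linarith
    · simp
  refine ⟨key, fun w => ?_⟩
  refine closure_mono ?_ (key w)
  rintro p ⟨z₁, z₂, h1, h2, hp⟩
  rw [hA]
  exact ⟨z₁, z₂, h1, h2, 0, 0, by simpa using hp⟩
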